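/- Let A be a commutative ring, u an element with uⁿ ≠ 1 invertible differences, and x an element of an A-algebra with relation x·y = u·y·x for a fixed y. Then exp(Σ_{n≥1} aₙ xⁿ)·y·exp(-Σ_{n≥1} aₙ xⁿ) = y·exp(Σ_{n≥1} aₙ(uⁿ - 1)xⁿ) as formal series, where the xⁿ commute among themselves. -/

import Mathlib

open PowerSeries

private lemma coeff_derivativeFun' {R : Type*} [CommRing R] (f : R⟦X⟧) (n : ℕ) :
    coeff n (derivativeFun f) = coeff (n + 1) f * (n + 1) :=
  coeff_derivative f n

private lemma ode_uniq {A : Type*} [CommRing A] [Algebra ℚ A] (q G H : A⟦X⟧)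
    (h0 : constantCoeff G = constantCoeff H)
    (hG : derivativeFun G = q * G) (hH : derivativeFun H = q * H) : G = H := by
  ext n
  induction n using Nat.strong_induction_on with
  | _ n ih =>
    match n with
    | 0 => simpa [PowerSeries.coeff_zero_eq_constantCoeff] using h0
    | n + 1 =>
      have hu : IsUnit ((n : A) + 1) := by
        have : ((n : A) + 1) = algebraMap ℚ A ((n : ℚ) + 1) := by
          push_cast; simp
        rw [this]
        exact (isUnit_iff_ne_zero.mpr (by positivity)).map (algebraMap ℚ A)
      apply hu.mul_left_cancel
      have hGc := congrArg (coeff n) hG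
      have hHc := congrArg (coeff n) hH
      rw [coeff_derivativeFun'] at hGc hHc
      have : (coeff n) (q * G) = (coeff n) (q * H) := by
        rw [PowerSeries.coeff_mul, PowerSeries.coeff_mul]
        refine Finset.sum_congr rfl fun p hp => ?_
        rw [ih p.2 (by
          have := Finset.HasAntidiagonal.antidiagonal.snd_le hp
          omega)]
      rw [mul_comm ((n : A) + 1), mul_comm ((n : A) + 1), hGc, hHc, this]

private lemma derivativeFun_rescale {A : Type*} [CommRing A] (c : A) (f : A⟦X⟧) :
    derivativeFun (rescale c f) = C c * rescale c (derivativeFun f) := by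
  ext n
  rw [coeff_derivativeFun', coeff_rescale, PowerSeries.coeff_C_mul, coeff_rescale,
    coeff_derivativeFun', pow_succ]
  ring

theorem conjugation_by_exponential
    {A : Type*} [CommRing A] [Algebra ℚ A]
    (u : Aˣ)
    (a : ℕ → A) (ha0 : a 0 = 0)
    (E Einv F : A⟦X⟧)
    (hE0 : constantCoeff E = 1)
    (hEder : derivativeFun E = derivativeFun (PowerSeries.mk a) * E)
    (hEinv : E * Einv = 1)
    (hF0 : constantCoeff F = 1)
    (hFder : derivativeFun F
      = derivativeFun (PowerSeries.mk fun n => a n * ((u : A) ^ n - 1)) * F)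
    {B : Type*} [Ring B] [Algebra A B]
    (φ : A⟦X⟧ →ₐ[A] B)   -- f ↦ f(x)
    (y : B)
    (hy : ∀ f : A⟦X⟧, φ f * y = y * φ (PowerSeries.rescale (u : A) f)) :
    φ E * y * φ Einv = y * φ F := by
  set q : A⟦X⟧ := derivativeFun (PowerSeries.mk fun n => a n * ((u : A) ^ n - 1))
      + derivativeFun (PowerSeries.mk a) with hq
  have hqkey : C (u : A) * rescale (u : A) (derivativeFun (PowerSeries.mk a)) = q := by
    ext n
    simp only [hq, map_add, PowerSeries.coeff_C_mul, coeff_rescale, coeff_derivativeFun',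
      PowerSeries.coeff_mk, pow_succ]
    ring
  have hG : derivativeFun (rescale (u : A) E) = q * rescale (u : A) E := by
    rw [derivativeFun_rescale, hEder, map_mul, ← mul_assoc, hqkey]
  have hH : derivativeFun (F * E) = q * (F * E) := by
    rw [derivativeFun_mul, hEder, hFder, smul_eq_mul, smul_eq_mul, hq]
    ring
  have h0 : constantCoeff (rescale (u : A) E) = constantCoeff (F * E) := by
    rw [map_mul, hF0, hE0, one_mul, ← PowerSeries.coeff_zero_eq_constantCoeff,
      coeff_rescale, pow_zero, one_mul, PowerSeries.coeff_zero_eq_constantCoeff, hE0]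
  have key : rescale (u : A) E = F * E := ode_uniq q _ _ h0 hG hH
  have hfin : F * E * Einv = F := by rw [mul_assoc, hEinv, mul_one]
  rw [hy E, mul_assoc, ← map_mul, key, hfin]
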